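/- Let N ≥ 5 be an integer and R > 1. Then there exists C > 0, depending only on N and R, such that for every λ ≥ 2 and every ξ ∈ ℝ^N with |ξ| ≤ 1, one has ∫_{B(0,R)} U_{λ,ξ}(x)^{(N+2)/(N−2)} |x−ξ|² dx ≤ C λ^{−(N+2)/2} log λ. -/

import Mathlib

open MeasureTheory

/-- The standard bubble `U_{λ,ξ}(x) = λ^{(N-2)/2} (1+λ²|x-ξ|²)^{-(N-2)/2}`. -/
noncomputable def bubble (N : ℕ) (lam : ℝ) (ξ x : EuclideanSpace ℝ (Fin N)) : ℝ :=
  lam ^ (((N : ℝ) - 2) / 2) / (1 + lam ^ 2 * ‖x - ξ‖ ^ 2) ^ (((N : ℝ) - 2) / 2)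

/-- Polar-coordinates computation of the integral of `‖x-ξ‖^{-N}` over an annulus. -/
lemma annulus_integral (N : ℕ) (hN : 1 ≤ N) (ξ : EuclideanSpace ℝ (Fin N)) {a b : ℝ}
    (ha : 0 < a) (hab : a ≤ b) :
    ∫ x in {x : EuclideanSpace ℝ (Fin N) | ‖x - ξ‖ ∈ Set.Ioc a b}, (‖x - ξ‖ ^ N)⁻¹ =
      (N : ℝ) * (volume (Metric.ball (0 : EuclideanSpace ℝ (Fin N)) 1)).toReal *
        Real.log (b / a) := by
  haveI : Nontrivial (EuclideanSpace ℝ (Fin N)) :=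
    nontrivial_of_ne (EuclideanSpace.single ⟨0, hN⟩ 1) 0 (by
      intro hc
      have := congrArg (fun f : EuclideanSpace ℝ (Fin N) => f ⟨0, hN⟩) hc
      simp at this)
  obtain ⟨M, rfl⟩ : ∃ M, N = M + 1 := ⟨N - 1, (Nat.succ_pred_eq_of_pos hN).symm⟩
  have hcont : Continuous (fun x : EuclideanSpace ℝ (Fin (M + 1)) => ‖x - ξ‖) :=
    (continuous_id.sub continuous_const).norm
  have hmeas : MeasurableSet {x : EuclideanSpace ℝ (Fin (M + 1)) | ‖x - ξ‖ ∈ Set.Ioc a b} :=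
    hcont.measurable measurableSet_Ioc
  set f₀ : ℝ → ℝ := (Set.Ioc a b).indicator fun r => (r ^ (M + 1))⁻¹ with hf₀
  have h1 : ∫ x in {x : EuclideanSpace ℝ (Fin (M + 1)) | ‖x - ξ‖ ∈ Set.Ioc a b},
      (‖x - ξ‖ ^ (M + 1))⁻¹ = ∫ x : EuclideanSpace ℝ (Fin (M + 1)), f₀ ‖x - ξ‖ := by
    rw [← integral_indicator hmeas]
    congr 1
  have h2 : ∫ x : EuclideanSpace ℝ (Fin (M + 1)), f₀ ‖x - ξ‖ =
      ∫ x : EuclideanSpace ℝ (Fin (M + 1)), f₀ ‖x‖ :=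
    integral_sub_right_eq_self (fun x => f₀ ‖x‖) ξ
  have h3 : ∫ y in Set.Ioi (0:ℝ), y ^ (M + 1 - 1) • f₀ y = Real.log (b / a) := by
    have e1 : ∀ y : ℝ, y ^ (M + 1 - 1) • f₀ y =
        (Set.Ioc a b).indicator (fun y => y ^ M * (y ^ (M + 1))⁻¹) y := by
      intro y
      by_cases h : y ∈ Set.Ioc a b <;> simp [f₀, Set.indicator, h]
    simp only [e1]
    rw [setIntegral_indicator measurableSet_Ioc]
    have hint : Set.Ioi (0:ℝ) ∩ Set.Ioc a b = Set.Ioc a b :=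
      Set.inter_eq_right.mpr (fun y hy => lt_trans ha hy.1)
    rw [hint]
    have e2 : Set.EqOn (fun y : ℝ => y ^ M * (y ^ (M + 1))⁻¹) (fun y => y⁻¹) (Set.Ioc a b) := by
      intro y hy
      have hy0 : y ≠ 0 := (lt_trans ha hy.1).ne'
      have hpows : y ^ (M + 1) = y ^ M * y := pow_succ y M
      simp only [hpows, mul_inv]
      rw [← mul_assoc, mul_inv_cancel₀ (pow_ne_zero _ hy0), one_mul]
    rw [setIntegral_congr_fun measurableSet_Ioc e2,
      ← intervalIntegral.integral_of_le hab, integral_inv_of_pos ha (lt_of_lt_of_le ha hab)]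
  rw [h1, h2, integral_fun_norm_addHaar volume f₀]
  simp only [finrank_euclideanSpace_fin]
  rw [h3, nsmul_eq_mul, smul_eq_mul, mul_assoc]
  rfl

/-- Pointwise bound on the integrand. -/
lemma pointwise_bound (N : ℕ) (hN : 5 ≤ N) {lam r : ℝ} (hlam : 2 ≤ lam) (hr : 0 ≤ r) :
    (lam ^ (((N : ℝ) - 2) / 2) / (1 + lam ^ 2 * r ^ 2) ^ (((N : ℝ) - 2) / 2)) ^
        (((N : ℝ) + 2) / ((N : ℝ) - 2)) * r ^ 2 ≤
      lam ^ (((N : ℝ) - 2) / 2) * min 1 (((lam * r) ^ N)⁻¹) := by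
  have hN5 : (5:ℝ) ≤ (N:ℝ) := by exact_mod_cast hN
  have hN2 : (0:ℝ) < (N:ℝ) - 2 := by linarith
  have hlam0 : (0:ℝ) < lam := by linarith
  set s := lam * r with hs
  have hs0 : 0 ≤ s := mul_nonneg hlam0.le hr
  have hD : (1:ℝ) ≤ 1 + lam ^ 2 * r ^ 2 := by nlinarith
  have hD0 : (0:ℝ) < 1 + lam ^ 2 * r ^ 2 := lt_of_lt_of_le one_pos hD
  have hsq : s ^ 2 ≤ 1 + lam ^ 2 * r ^ 2 := by rw [hs]; nlinarith
  set m : ℝ := ((N : ℝ) + 2) / 2 with hm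
  have hm1 : (1:ℝ) ≤ m := by rw [hm]; linarith
  have hDm0 : (0:ℝ) < (1 + lam ^ 2 * r ^ 2) ^ m := Real.rpow_pos_of_pos hD0 m
  have key : (lam ^ (((N : ℝ) - 2) / 2) / (1 + lam ^ 2 * r ^ 2) ^ (((N : ℝ) - 2) / 2)) ^
        (((N : ℝ) + 2) / ((N : ℝ) - 2))
      = lam ^ m / (1 + lam ^ 2 * r ^ 2) ^ m := by
    rw [Real.div_rpow (Real.rpow_nonneg hlam0.le _) (Real.rpow_nonneg hD0.le _),
      ← Real.rpow_mul hlam0.le, ← Real.rpow_mul hD0.le]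
    have he : ((N:ℝ) - 2) / 2 * (((N:ℝ) + 2) / ((N:ℝ) - 2)) = m := by
      rw [hm]; field_simp
    rw [he]
  have hLHS : lam ^ m / (1 + lam ^ 2 * r ^ 2) ^ m * r ^ 2 =
      lam ^ (((N : ℝ) - 2) / 2) * (s ^ 2 / (1 + lam ^ 2 * r ^ 2) ^ m) := by
    have hlm : lam ^ m = lam ^ (((N : ℝ) - 2) / 2) * lam ^ 2 := by
      rw [← Real.rpow_natCast lam 2, ← Real.rpow_add hlam0]
      congr 1
      rw [hm]; push_cast; ring
    rw [hlm, hs]; ring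
  rw [key, hLHS]
  refine mul_le_mul_of_nonneg_left (le_min ?_ ?_) (Real.rpow_nonneg hlam0.le _)
  · rw [div_le_one hDm0]
    calc s ^ 2 ≤ 1 + lam ^ 2 * r ^ 2 := hsq
      _ = (1 + lam ^ 2 * r ^ 2) ^ (1:ℝ) := (Real.rpow_one _).symm
      _ ≤ (1 + lam ^ 2 * r ^ 2) ^ m := Real.rpow_le_rpow_of_exponent_le hD hm1
  · rcases eq_or_lt_of_le hs0 with h | hspos
    · rw [← h]
      have : (0:ℝ) ^ 2 / (1 + lam ^ 2 * r ^ 2) ^ m = 0 := by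
        rw [zero_pow (by norm_num), zero_div]
      rw [this]
      positivity
    · rw [← one_div, div_le_div_iff₀ hDm0 (pow_pos hspos N), one_mul]
      have hstep : s ^ 2 * s ^ N = s ^ (N + 2) := by rw [← pow_add]; ring_nf
      rw [hstep]
      have h1 : (s ^ 2 : ℝ) ^ m = s ^ (N + 2) := by
        rw [← Real.rpow_natCast s 2, ← Real.rpow_mul hs0, ← Real.rpow_natCast s (N + 2)]
        congr 1
        rw [hm]; push_cast; ring
      rw [← h1]
      exact Real.rpow_le_rpow (sq_nonneg s) hsq (by linarith)

theorem bubble_second_moment_estimate (N : ℕ) (hN : 5 ≤ N) (R : ℝ) (hR : 1 < R) :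
    ∃ C : ℝ, 0 < C ∧ ∀ lam : ℝ, 2 ≤ lam → ∀ ξ : EuclideanSpace ℝ (Fin N), ‖ξ‖ ≤ 1 →
      ∫ x in Metric.ball (0 : EuclideanSpace ℝ (Fin N)) R,
          bubble N lam ξ x ^ (((N : ℝ) + 2) / ((N : ℝ) - 2)) * ‖x - ξ‖ ^ 2 ≤
        C * lam ^ (-((N : ℝ) + 2) / 2) * Real.log lam := by
  have hN1 : 1 ≤ N := le_trans (by norm_num) hN
  set ω : ℝ := (volume (Metric.ball (0 : EuclideanSpace ℝ (Fin N)) 1)).toReal with hω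
  have hω0 : 0 ≤ ω := ENNReal.toReal_nonneg
  have hlog2 : 0 < Real.log 2 := Real.log_pos one_lt_two
  have hlogR : 0 ≤ Real.log (R + 1) := Real.log_nonneg (by linarith)
  set K : ℝ := ω + (N : ℝ) * ω * Real.log (R + 1) with hK
  have hK0 : 0 ≤ K := by positivity
  refine ⟨K / Real.log 2 + (N : ℝ) * ω + 1, by positivity, ?_⟩
  intro lam hlam ξ hξ
  have hlam0 : (0:ℝ) < lam := by linarith
  have hloglam : Real.log 2 ≤ Real.log lam := Real.log_le_log two_pos hlam
  have hloglam0 : 0 < Real.log lam := lt_of_lt_of_le hlog2 hloglam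
  set p : ℝ := ((N : ℝ) - 2) / 2 with hp
  -- the majorant
  set g : EuclideanSpace ℝ (Fin N) → ℝ :=
    fun x => lam ^ p * min 1 (((lam * ‖x - ξ‖) ^ N)⁻¹) with hg
  have hgm : Measurable g := by
    apply Measurable.mul measurable_const
    apply Measurable.min measurable_const
    exact ((measurable_const.mul (measurable_id.sub measurable_const).norm).pow_const N).inv
  have hg0 : ∀ x, 0 ≤ g x := fun x =>
    mul_nonneg (Real.rpow_nonneg hlam0.le _)
      (le_min zero_le_one (inv_nonneg.2 (pow_nonneg (mul_nonneg hlam0.le (norm_nonneg _)) N)))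
  have hgle : ∀ x, g x ≤ lam ^ p := fun x => by
    calc g x ≤ lam ^ p * 1 :=
          mul_le_mul_of_nonneg_left (min_le_left _ _) (Real.rpow_nonneg hlam0.le _)
      _ = lam ^ p := mul_one _
  have hgint : ∀ s : Set (EuclideanSpace ℝ (Fin N)), volume s < ⊤ → IntegrableOn g s volume := by
    intro s hsfin
    refine Integrable.mono' (g := fun _ => lam ^ p) (integrableOn_const hsfin.ne)
      hgm.aestronglyMeasurable.restrict ?_
    filter_upwards with x
    rw [Real.norm_eq_abs, abs_of_nonneg (hg0 x)]
    exact hgle x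
  -- the two pieces
  set A1 : Set (EuclideanSpace ℝ (Fin N)) := Metric.closedBall ξ (1 / lam) with hA1
  set A2 : Set (EuclideanSpace ℝ (Fin N)) := {x | ‖x - ξ‖ ∈ Set.Ioc (1 / lam) (R + 1)} with hA2
  have hA2meas : MeasurableSet A2 :=
    ((continuous_id.sub continuous_const).norm.measurable) measurableSet_Ioc
  have hA1meas : MeasurableSet A1 := Metric.isClosed_closedBall.measurableSet
  have hsub : Metric.ball (0 : EuclideanSpace ℝ (Fin N)) R ⊆ A1 ∪ A2 := by
    intro x hx
    have hxR : ‖x - ξ‖ ≤ R + 1 := by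
      calc ‖x - ξ‖ ≤ ‖x‖ + ‖ξ‖ := norm_sub_le _ _
        _ ≤ R + 1 := add_le_add (le_of_lt (mem_ball_zero_iff.mp hx)) hξ
    by_cases h : ‖x - ξ‖ ≤ 1 / lam
    · exact Or.inl (mem_closedBall_iff_norm.mpr h)
    · exact Or.inr ⟨lt_of_not_ge h, hxR⟩
  have hbig : A1 ∪ A2 ⊆ Metric.closedBall ξ (R + 1) := by
    intro x hx
    rcases hx with h | h
    · exact Metric.closedBall_subset_closedBall (by
        have : 1 / lam ≤ 1 / 2 := by
          apply div_le_div_of_nonneg_left one_pos.le two_pos hlam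
        linarith) h
    · exact mem_closedBall_iff_norm.mpr h.2
  have hfinU : volume (A1 ∪ A2) < ⊤ :=
    lt_of_le_of_lt (measure_mono hbig) measure_closedBall_lt_top
  have hgintU : IntegrableOn g (A1 ∪ A2) volume := hgint _ hfinU
  have hdisj : Disjoint A1 A2 := by
    rw [Set.disjoint_left]
    intro x h1 h2
    exact absurd (mem_closedBall_iff_norm.mp h1) (not_le.mpr h2.1)
  -- piece 1 bound
  have hA1fin : volume A1 < ⊤ := measure_closedBall_lt_top
  have hA1bound : ∫ x in A1, g x ≤ lam ^ p * ((1 / lam) ^ N * ω) := by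
    have h := norm_setIntegral_le_of_norm_le_const (C := lam ^ p) hA1fin
      (fun x _ => by rw [Real.norm_eq_abs, abs_of_nonneg (hg0 x)]; exact hgle x)
    have hvol : (volume A1).toReal = (1 / lam) ^ N * ω := by
      rw [hA1, Measure.addHaar_closedBall volume ξ (by positivity : (0:ℝ) ≤ 1 / lam),
        finrank_euclideanSpace_fin, ENNReal.toReal_mul, ENNReal.toReal_ofReal (by positivity), hω]
    calc ∫ x in A1, g x ≤ |∫ x in A1, g x| := le_abs_self _
      _ = ‖∫ x in A1, g x‖ := (Real.norm_eq_abs _).symm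
      _ ≤ lam ^ p * (volume A1).toReal := h
      _ = lam ^ p * ((1 / lam) ^ N * ω) := by rw [hvol]
  -- piece 2 bound
  have hA2fin : volume A2 < ⊤ :=
    lt_of_le_of_lt (measure_mono fun x hx => hbig (Or.inr hx)) measure_closedBall_lt_top
  set G2 : EuclideanSpace ℝ (Fin N) → ℝ :=
    fun x => (lam ^ p * ((lam : ℝ) ^ N)⁻¹) * (‖x - ξ‖ ^ N)⁻¹ with hG2
  have hG2m : Measurable G2 :=
    measurable_const.mul ((measurable_id.sub measurable_const).norm.pow_const N).inv
  have hG2int : IntegrableOn G2 A2 volume := by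
    refine Integrable.mono' (g := fun _ => (lam ^ p * ((lam : ℝ) ^ N)⁻¹) * ((1 / lam) ^ N)⁻¹)
      (integrableOn_const hA2fin.ne) hG2m.aestronglyMeasurable.restrict ?_
    rw [ae_restrict_iff' hA2meas]
    filter_upwards with x hx
    have h1 : (1:ℝ)/lam ≤ ‖x - ξ‖ := le_of_lt hx.1
    have h2 : (0:ℝ) < 1/lam := by positivity
    rw [Real.norm_eq_abs, abs_of_nonneg (by simp only [hG2]; positivity)]
    have hinv : (‖x - ξ‖ ^ N)⁻¹ ≤ ((1/lam) ^ N)⁻¹ := by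
      apply inv_anti₀ (pow_pos h2 N)
      exact pow_le_pow_left₀ h2.le h1 N
    exact mul_le_mul_of_nonneg_left hinv (by positivity)
  have hgleG2 : ∀ x ∈ A2, g x ≤ G2 x := by
    intro x _
    simp only [hg, hG2]
    have hsplit : ((lam * ‖x - ξ‖) ^ N)⁻¹ = ((lam:ℝ) ^ N)⁻¹ * (‖x - ξ‖ ^ N)⁻¹ := by
      rw [mul_pow, mul_inv]
    calc lam ^ p * min 1 (((lam * ‖x - ξ‖) ^ N)⁻¹)
        ≤ lam ^ p * (((lam * ‖x - ξ‖) ^ N)⁻¹) :=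
          mul_le_mul_of_nonneg_left (min_le_right _ _) (Real.rpow_nonneg hlam0.le _)
      _ = (lam ^ p * ((lam:ℝ) ^ N)⁻¹) * (‖x - ξ‖ ^ N)⁻¹ := by rw [hsplit]; ring
  have hAnn : ∫ x in A2, (‖x - ξ‖ ^ N)⁻¹ =
      (N : ℝ) * ω * Real.log ((R + 1) / (1 / lam)) := by
    have h1lam : (1:ℝ)/lam ≤ R + 1 := by
      have : (1:ℝ)/lam ≤ 1 := by rw [div_le_one hlam0]; linarith
      linarith
    rw [annulus_integral N hN1 ξ (by positivity) h1lam, hω]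
  have hlogsplit : Real.log ((R + 1) / (1 / lam)) = Real.log (R + 1) + Real.log lam := by
    have : (R + 1) / (1 / lam) = (R + 1) * lam := by field_simp
    rw [this, Real.log_mul (by linarith) hlam0.ne']
  have hA2bound : ∫ x in A2, g x ≤
      (lam ^ p * ((lam : ℝ) ^ N)⁻¹) * ((N:ℝ) * ω * (Real.log (R + 1) + Real.log lam)) := by
    have step1 : ∫ x in A2, g x ≤ ∫ x in A2, G2 x :=
      setIntegral_mono_on (hgintU.mono_set Set.subset_union_right) hG2int hA2meas hgleG2
    have step2 : ∫ x in A2, G2 x =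
        (lam ^ p * ((lam : ℝ) ^ N)⁻¹) * ∫ x in A2, (‖x - ξ‖ ^ N)⁻¹ := by
      simp only [hG2]
      exact MeasureTheory.integral_const_mul _ _
    rw [step2, hAnn, hlogsplit] at step1
    exact step1
  -- integrability of the integrand
  have hballfin : volume (Metric.ball (0 : EuclideanSpace ℝ (Fin N)) R) < ⊤ :=
    measure_ball_lt_top
  have hgintball : IntegrableOn g (Metric.ball 0 R) volume := hgint _ hballfin
  have hf0 : ∀ x : EuclideanSpace ℝ (Fin N),
      0 ≤ bubble N lam ξ x ^ (((N : ℝ) + 2) / ((N : ℝ) - 2)) * ‖x - ξ‖ ^ 2 := fun x =>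
    mul_nonneg (Real.rpow_nonneg (div_nonneg (Real.rpow_nonneg hlam0.le _)
      (Real.rpow_nonneg (by positivity) _)) _) (sq_nonneg _)
  have hfg : ∀ x : EuclideanSpace ℝ (Fin N),
      bubble N lam ξ x ^ (((N : ℝ) + 2) / ((N : ℝ) - 2)) * ‖x - ξ‖ ^ 2 ≤ g x := by
    intro x
    have h := pointwise_bound N hN hlam (norm_nonneg (x - ξ))
    rw [← hp] at h
    exact h
  have hbpos : ∀ x : EuclideanSpace ℝ (Fin N), 0 < bubble N lam ξ x := by
    intro x; unfold bubble
    exact div_pos (Real.rpow_pos_of_pos hlam0 _) (Real.rpow_pos_of_pos (by positivity) _)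
  have hbc : Continuous (bubble N lam ξ) := by
    unfold bubble
    apply Continuous.div continuous_const
    · apply Continuous.rpow_const
      · exact continuous_const.add
          (continuous_const.mul ((continuous_id.sub continuous_const).norm.pow 2))
      · intro x; left; positivity
    · intro x
      exact (Real.rpow_pos_of_pos (by positivity) _).ne'
  have hfc : Continuous fun x : EuclideanSpace ℝ (Fin N) =>
      bubble N lam ξ x ^ (((N : ℝ) + 2) / ((N : ℝ) - 2)) * ‖x - ξ‖ ^ 2 :=
    (hbc.rpow_const (fun x => Or.inl (hbpos x).ne')).mul
      ((continuous_id.sub continuous_const).norm.pow 2)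
  have hfint : IntegrableOn
      (fun x => bubble N lam ξ x ^ (((N : ℝ) + 2) / ((N : ℝ) - 2)) * ‖x - ξ‖ ^ 2)
      (Metric.ball 0 R) volume := by
    refine Integrable.mono' hgintball hfc.aestronglyMeasurable.restrict ?_
    filter_upwards with x
    rw [Real.norm_eq_abs, abs_of_nonneg (hf0 x)]
    exact hfg x
  -- rpow arithmetic
  have hrpow1 : lam ^ p * (1 / lam) ^ N = lam ^ (-((N : ℝ) + 2) / 2) := by
    rw [one_div, inv_pow, ← Real.rpow_natCast lam N, ← Real.rpow_neg hlam0.le,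
      ← Real.rpow_add hlam0, hp]
    congr 1
    push_cast; ring
  set t : ℝ := lam ^ (-((N : ℝ) + 2) / 2) with ht
  have ht0 : 0 ≤ t := Real.rpow_nonneg hlam0.le _
  calc ∫ x in Metric.ball (0 : EuclideanSpace ℝ (Fin N)) R,
        bubble N lam ξ x ^ (((N : ℝ) + 2) / ((N : ℝ) - 2)) * ‖x - ξ‖ ^ 2
      ≤ ∫ x in Metric.ball (0 : EuclideanSpace ℝ (Fin N)) R, g x :=
        setIntegral_mono_on hfint hgintball measurableSet_ball (fun x _ => hfg x)
    _ ≤ ∫ x in A1 ∪ A2, g x :=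
        setIntegral_mono_set hgintU (Filter.Eventually.of_forall hg0)
          (HasSubset.Subset.eventuallyLE hsub)
    _ = (∫ x in A1, g x) + ∫ x in A2, g x :=
        setIntegral_union hdisj hA2meas (hgintU.mono_set Set.subset_union_left)
          (hgintU.mono_set Set.subset_union_right)
    _ ≤ lam ^ p * ((1 / lam) ^ N * ω) +
        (lam ^ p * ((lam : ℝ) ^ N)⁻¹) * ((N:ℝ) * ω * (Real.log (R + 1) + Real.log lam)) :=
        add_le_add hA1bound hA2bound
    _ = t * K + ((N:ℝ) * ω) * (t * Real.log lam) := by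
        rw [← hrpow1, hK]; ring
    _ ≤ (K / Real.log 2 + (N:ℝ) * ω + 1) * t * Real.log lam := by
        have hK2 : K ≤ K / Real.log 2 * Real.log lam := by
          rw [div_mul_eq_mul_div, le_div_iff₀ hlog2]
          exact mul_le_mul_of_nonneg_left hloglam hK0
        have h1 : t * K ≤ t * (K / Real.log 2 * Real.log lam) :=
          mul_le_mul_of_nonneg_left hK2 ht0
        nlinarith [mul_nonneg ht0 hloglam0.le]
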